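/- Let P_{Z,X} be a joint pmf on finite sets Z × X with strictly positive marginals P_Z and P_X, let B = B(P_{Z,X}) be its divergence transition matrix, and let r = min(|X|, |Z|). Then the nuclear norm of B satisfies the Ky Fan variational identity ‖B‖_* = max { tr(Fᵀ P_{Z,X} G) : F ∈ ℝ^{|Z| × r}, G ∈ ℝ^{|X| × r}, Fᵀ [P_Z] F = I_r, Gᵀ [P_X] G = I_r }. -/

import Mathlib

open Matrix

/-- The divergence transition matrix of a joint pmf `J` on `α × β` with marginals
`Pa` and `Pb`: `B(J) = [Pa]^{-1/2} J [Pb]^{-1/2}`. -/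
noncomputable def DTM {α β : Type*} [Fintype α] [Fintype β] [DecidableEq α] [DecidableEq β]
    (J : Matrix α β ℝ) (Pa : α → ℝ) (Pb : β → ℝ) : Matrix α β ℝ :=
  Matrix.diagonal (fun a => (Real.sqrt (Pa a))⁻¹) * J *
    Matrix.diagonal (fun b => (Real.sqrt (Pb b))⁻¹)


-- basic dot product lemmas
lemma KF.dot_self_nonneg {n : Type*} [Fintype n] (v : n → ℝ) : 0 ≤ v ⬝ᵥ v :=
  Finset.sum_nonneg fun i _ => mul_self_nonneg _

lemma KF.dot_aux {m n : Type*} [Fintype m] [Fintype n] (A : Matrix m n ℝ) (x y : m → ℝ) :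
    (Aᵀ *ᵥ x) ⬝ᵥ (Aᵀ *ᵥ y) = x ⬝ᵥ ((A * Aᵀ) *ᵥ y) := by
  rw [mulVec_transpose, ← dotProduct_mulVec, mulVec_mulVec]

lemma KF.contraction {Z r : Type*} [Fintype Z] [Fintype r] [DecidableEq Z] [DecidableEq r]
    (U : Matrix Z r ℝ) (h : Uᵀ * U = 1) (y : Z → ℝ) :
    (Uᵀ *ᵥ y) ⬝ᵥ (Uᵀ *ᵥ y) ≤ y ⬝ᵥ y := by
  have key : (Uᵀ *ᵥ y) ⬝ᵥ (Uᵀ *ᵥ y) = y ⬝ᵥ ((U * Uᵀ) *ᵥ y) := KF.dot_aux U y y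
  set E : Matrix Z Z ℝ := 1 - U * Uᵀ with hE
  have hEt : Eᵀ = E := by
    simp [hE, transpose_sub, transpose_mul, transpose_one]
  have hEE : E * Eᵀ = E := by
    rw [hEt]
    have : U * Uᵀ * (U * Uᵀ) = U * Uᵀ := by
      rw [Matrix.mul_assoc, ← Matrix.mul_assoc Uᵀ U, h, Matrix.one_mul]
    simp [hE, mul_sub, sub_mul, this]
  have h0 : 0 ≤ (Eᵀ *ᵥ y) ⬝ᵥ (Eᵀ *ᵥ y) := KF.dot_self_nonneg _
  rw [KF.dot_aux E y y, hEE, hE, sub_mulVec, dotProduct_sub, one_mulVec] at h0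
  linarith [h0, key.ge]

lemma KF.dot_le_sqrt {n : Type*} [Fintype n] (a b : n → ℝ) :
    a ⬝ᵥ b ≤ Real.sqrt (a ⬝ᵥ a) * Real.sqrt (b ⬝ᵥ b) := by
  have h := Finset.sum_mul_sq_le_sq_mul_sq Finset.univ a b
  have h1 : a ⬝ᵥ b ≤ Real.sqrt ((a ⬝ᵥ b) ^ 2) := by
    rw [Real.sqrt_sq_eq_abs]; exact le_abs_self _
  refine h1.trans ?_
  rw [← Real.sqrt_mul (KF.dot_self_nonneg a)]
  apply Real.sqrt_le_sqrt
  simpa [dotProduct, sq] using h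
open Matrix

lemma KF.entry_dot {X : Type*} [Fintype X] (M Q : Matrix X X ℝ) (a b : X) :
    (fun x => Q x a) ⬝ᵥ (M *ᵥ fun x => Q x b) = (Qᵀ * M * Q) a b := by
  simp only [mul_apply, dotProduct, mulVec, transpose_apply, Finset.sum_mul, Finset.mul_sum]
  rw [Finset.sum_comm]
  exact Finset.sum_congr rfl fun x _ => Finset.sum_congr rfl fun x' _ => by ring

section spectral
variable {Z X : Type*} [Fintype Z] [Fintype X] [DecidableEq Z] [DecidableEq X]
  (B : Matrix Z X ℝ)

noncomputable def KF.Q : Matrix X X ℝ :=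
  (posSemidef_conjTranspose_mul_self B).1.eigenvectorUnitary

noncomputable def KF.d (B : Matrix Z X ℝ) : X → ℝ :=
  (posSemidef_conjTranspose_mul_self B).1.eigenvalues

lemma KF.hQ1 : KF.Q B * (KF.Q B)ᵀ = 1 := by
  have := mem_unitaryGroup_iff.mp (posSemidef_conjTranspose_mul_self B).1.eigenvectorUnitary.2
  simpa [KF.Q, star_eq_conjTranspose, conjTranspose_eq_transpose_of_trivial] using this

lemma KF.hQ2 : (KF.Q B)ᵀ * KF.Q B = 1 := by
  have := mem_unitaryGroup_iff'.mp (posSemidef_conjTranspose_mul_self B).1.eigenvectorUnitary.2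
  simpa [KF.Q, star_eq_conjTranspose, conjTranspose_eq_transpose_of_trivial] using this

lemma KF.hdiag : (KF.Q B)ᵀ * (Bᵀ * B) * KF.Q B = Matrix.diagonal (KF.d B) := by
  have := (posSemidef_conjTranspose_mul_self B).1.conjStarAlgAut_star_eigenvectorUnitary
  rw [Unitary.conjStarAlgAut_star_apply] at this
  simp only [star_eq_conjTranspose, conjTranspose_eq_transpose_of_trivial] at this
  simpa [KF.Q, KF.d, conjTranspose_eq_transpose_of_trivial] using this

lemma KF.d_nonneg (x : X) : 0 ≤ KF.d B x :=
  (posSemidef_conjTranspose_mul_self B).eigenvalues_nonneg x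

lemma KF.trace_sqrt :
    (((Matrix.posSemidef_conjTranspose_mul_self B).1.eigenvectorUnitary : Matrix X X ℝ) *
        Matrix.diagonal ((RCLike.ofReal : ℝ → ℝ) ∘ Real.sqrt ∘ (Matrix.posSemidef_conjTranspose_mul_self B).1.eigenvalues) *
        (star ((Matrix.posSemidef_conjTranspose_mul_self B).1.eigenvectorUnitary : Matrix X X ℝ))).trace = ∑ x, Real.sqrt (KF.d B x) := by
  show (KF.Q B * Matrix.diagonal _ * star (KF.Q B)).trace = _
  rw [trace_mul_cycle]
  rw [show star (KF.Q B) = (KF.Q B)ᵀ by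
    simp [star_eq_conjTranspose, conjTranspose_eq_transpose_of_trivial]]
  rw [KF.hQ2, Matrix.one_mul, trace_diagonal]
  simp [KF.d]

end spectral

lemma KF.upper {Z X r : Type*} [Fintype Z] [Fintype X] [Fintype r]
    [DecidableEq Z] [DecidableEq X] [DecidableEq r]
    (B : Matrix Z X ℝ) (U : Matrix Z r ℝ) (V : Matrix X r ℝ)
    (hU : Uᵀ * U = 1) (hV : Vᵀ * V = 1) :
    (Uᵀ * B * V).trace ≤ (((Matrix.posSemidef_conjTranspose_mul_self B).1.eigenvectorUnitary : Matrix X X ℝ) *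
        Matrix.diagonal ((RCLike.ofReal : ℝ → ℝ) ∘ Real.sqrt ∘ (Matrix.posSemidef_conjTranspose_mul_self B).1.eigenvalues) *
        (star ((Matrix.posSemidef_conjTranspose_mul_self B).1.eigenvectorUnitary : Matrix X X ℝ))).trace := by
  rw [KF.trace_sqrt]
  set Q := KF.Q B with hQdef
  set d := KF.d B with hddef
  have hexp : (Uᵀ * B * V).trace = ((Qᵀ * V) * (Uᵀ * (B * Q))).trace := by
    rw [trace_mul_comm (Qᵀ * V) (Uᵀ * (B * Q))]
    congr 1
    calc Uᵀ * B * V = Uᵀ * B * ((Q * Qᵀ) * V) := by rw [KF.hQ1, Matrix.one_mul]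
    _ = Uᵀ * (B * Q) * (Qᵀ * V) := by simp only [Matrix.mul_assoc]
  rw [hexp, Matrix.trace]
  apply Finset.sum_le_sum
  intro x _
  have ha : (fun i => (Qᵀ * V) x i) = Vᵀ *ᵥ (fun x' => Q x' x) := by
    ext i; simp [mul_apply, mulVec, dotProduct, mul_comm]
  have hb : (fun i => (Uᵀ * (B * Q)) i x) = Uᵀ *ᵥ (B *ᵥ fun x' => Q x' x) := by
    ext i; simp [mul_apply, mulVec, dotProduct]
  have hterm : ((Qᵀ * V) * (Uᵀ * (B * Q))).diag x
      = (Vᵀ *ᵥ (fun x' => Q x' x)) ⬝ᵥ (Uᵀ *ᵥ (B *ᵥ fun x' => Q x' x)) := by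
    rw [← ha, ← hb]; simp [Matrix.diag, mul_apply, dotProduct]
  rw [hterm]
  have h1 : (Vᵀ *ᵥ (fun x' => Q x' x)) ⬝ᵥ (Vᵀ *ᵥ (fun x' => Q x' x)) ≤ 1 := by
    have := KF.contraction V hV (fun x' => Q x' x)
    have h2 : (fun x' => Q x' x) ⬝ᵥ (fun x' => Q x' x) = 1 := by
      have := KF.entry_dot (1 : Matrix X X ℝ) Q x x
      simpa [Matrix.mul_one, hQdef, KF.hQ2 B, Matrix.one_apply] using this
    linarith
  have h2 : (Uᵀ *ᵥ (B *ᵥ fun x' => Q x' x)) ⬝ᵥ (Uᵀ *ᵥ (B *ᵥ fun x' => Q x' x)) ≤ d x := by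
    have hc := KF.contraction U hU (B *ᵥ fun x' => Q x' x)
    have he : (B *ᵥ fun x' => Q x' x) ⬝ᵥ (B *ᵥ fun x' => Q x' x) = d x := by
      have h3 := KF.dot_aux Bᵀ (fun x' => Q x' x) (fun x' => Q x' x)
      rw [transpose_transpose] at h3
      rw [h3, KF.entry_dot, KF.hdiag]
      simp [hddef]
    linarith
  calc (Vᵀ *ᵥ (fun x' => Q x' x)) ⬝ᵥ (Uᵀ *ᵥ (B *ᵥ fun x' => Q x' x))
      ≤ Real.sqrt ((Vᵀ *ᵥ (fun x' => Q x' x)) ⬝ᵥ (Vᵀ *ᵥ (fun x' => Q x' x)))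
        * Real.sqrt ((Uᵀ *ᵥ (B *ᵥ fun x' => Q x' x)) ⬝ᵥ (Uᵀ *ᵥ (B *ᵥ fun x' => Q x' x))) :=
        KF.dot_le_sqrt _ _
    _ ≤ Real.sqrt 1 * Real.sqrt (d x) := by
        exact mul_le_mul (Real.sqrt_le_sqrt h1) (Real.sqrt_le_sqrt h2)
          (Real.sqrt_nonneg _) (Real.sqrt_nonneg _)
    _ = Real.sqrt (d x) := by rw [Real.sqrt_one, one_mul]

lemma KF.mem {Z X : Type*} [Fintype Z] [Fintype X] [DecidableEq Z] [DecidableEq X]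
    (B : Matrix Z X ℝ) :
    ∃ (U : Matrix Z (Fin (min (Fintype.card X) (Fintype.card Z))) ℝ)
      (V : Matrix X (Fin (min (Fintype.card X) (Fintype.card Z))) ℝ),
      Uᵀ * U = 1 ∧ Vᵀ * V = 1 ∧
      (Uᵀ * B * V).trace = (((Matrix.posSemidef_conjTranspose_mul_self B).1.eigenvectorUnitary : Matrix X X ℝ) *
        Matrix.diagonal ((RCLike.ofReal : ℝ → ℝ) ∘ Real.sqrt ∘ (Matrix.posSemidef_conjTranspose_mul_self B).1.eigenvalues) *
        (star ((Matrix.posSemidef_conjTranspose_mul_self B).1.eigenvectorUnitary : Matrix X X ℝ))).trace := by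
  classical
  have hrX : min (Fintype.card X) (Fintype.card Z) ≤ Fintype.card X := min_le_left _ _
  have hrZ : min (Fintype.card X) (Fintype.card Z) ≤ Fintype.card Z := min_le_right _ _
  set Q := KF.Q B with hQdef
  set d := KF.d B with hddef
  -- the nonzero eigenvalues are at most r many
  have hcard : (Finset.univ.filter (fun x => d x ≠ 0)).card
      ≤ min (Fintype.card X) (Fintype.card Z) := by
    have h1 := (posSemidef_conjTranspose_mul_self B).1.rank_eq_card_non_zero_eigs
    have h2 : (Bᴴ * B).rank = B.rank := rank_conjTranspose_mul_self B
    have h3 : Fintype.card {x // d x ≠ 0} = (Finset.univ.filter (fun x => d x ≠ 0)).card :=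
      Fintype.card_subtype _
    have h1' : (Bᴴ * B).rank = Fintype.card {x // d x ≠ 0} := h1
    rw [← h3, ← h1', h2]
    exact le_min (rank_le_card_width B) (rank_le_card_height B)
  obtain ⟨T, hsT, hTuniv, hTcard⟩ :=
    Finset.exists_subsuperset_card_eq (Finset.subset_univ _) hcard
      (by simpa [Finset.card_univ] using hrX)
  set e := T.equivFinOfCardEq hTcard with hedef
  set f : Fin (min (Fintype.card X) (Fintype.card Z)) → X := fun i => (e.symm i : X) with hfdef
  have hf_inj : Function.Injective f := by
    intro i j hij
    exact e.symm.injective (Subtype.ext hij)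
  have hcover : ∀ x, d x ≠ 0 → ∃ i, f i = x := by
    intro x hx
    have hxT : x ∈ T := hsT (Finset.mem_filter.mpr ⟨Finset.mem_univ x, hx⟩)
    exact ⟨e ⟨x, hxT⟩, by simp [hfdef]⟩
  set V : Matrix X (Fin (min (Fintype.card X) (Fintype.card Z))) ℝ := Q.submatrix id f
    with hVdef
  have hVV : Vᵀ * V = 1 := by
    ext i j
    have h : (Qᵀ * Q) (f i) (f j) = (1 : Matrix X X ℝ) (f i) (f j) := by rw [KF.hQ2]
    rw [mul_apply] at h
    simp only [transpose_apply] at h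
    rw [mul_apply]
    simp only [transpose_apply, hVdef, submatrix_apply, id_eq]
    rw [h]
    simp [Matrix.one_apply, hf_inj.eq_iff]
  set W : Matrix Z (Fin (min (Fintype.card X) (Fintype.card Z))) ℝ := B * V with hWdef
  have hWW : Wᵀ * W = (Matrix.diagonal d).submatrix f f := by
    have h1 : W = (B * Q).submatrix id f := by
      ext z i; simp [hWdef, hVdef, mul_apply]
    rw [h1, transpose_submatrix]
    ext i j
    rw [mul_apply]
    simp only [submatrix_apply, transpose_apply, id_eq]
    have h2 : ((B * Q)ᵀ * (B * Q)) (f i) (f j) = Matrix.diagonal d (f i) (f j) := by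
      rw [show (B * Q)ᵀ * (B * Q) = Qᵀ * (Bᵀ * B) * Q from by
        rw [transpose_mul]; simp only [Matrix.mul_assoc], KF.hdiag]
    rw [mul_apply] at h2
    simp only [transpose_apply] at h2
    exact h2
  have hWdiagd : ∀ i j, ∑ z, W z i * W z j = if i = j then d (f i) else 0 := by
    intro i j
    have h := congrFun (congrFun hWW i) j
    rw [mul_apply] at h
    simp only [transpose_apply, submatrix_apply, Matrix.diagonal_apply] at h
    rw [h]
    simp [hf_inj.eq_iff]
  have hWzero : ∀ i, d (f i) = 0 → ∀ z, W z i = 0 := by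
    intro i hi z
    have hsum : ∑ z, W z i * W z i = 0 := by rw [hWdiagd i i]; simp [hi]
    have hnn : ∀ z ∈ Finset.univ, 0 ≤ W z i * W z i := fun _ _ => mul_self_nonneg _
    exact mul_self_eq_zero.mp ((Finset.sum_eq_zero_iff_of_nonneg hnn).mp hsum z (Finset.mem_univ z))
  -- Euclidean space construction of U
  set c : Fin (min (Fintype.card X) (Fintype.card Z)) → ℝ :=
    fun i => (Real.sqrt (d (f i)))⁻¹ with hcdef
  set u' : Fin (min (Fintype.card X) (Fintype.card Z)) → EuclideanSpace ℝ Z :=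
    fun i => c i • (WithLp.equiv 2 (Z → ℝ)).symm (fun z => W z i) with hu'def
  have hu'_inner : ∀ i j, d (f i) ≠ 0 → d (f j) ≠ 0 →
      (inner ℝ (u' i) (u' j) : ℝ) = if i = j then 1 else 0 := by
    intro i j hi hj
    rw [hu'def]
    simp only [real_inner_smul_left, real_inner_smul_right]
    have hip : (inner ℝ ((WithLp.equiv 2 (Z → ℝ)).symm (fun z => W z i))
        ((WithLp.equiv 2 (Z → ℝ)).symm (fun z => W z j)) : ℝ) = ∑ z, W z i * W z j := by
      simp [PiLp.inner_apply, RCLike.inner_apply, mul_comm]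
    rw [hip, hWdiagd i j]
    by_cases hij : i = j
    · subst hij
      simp only [if_pos rfl]
      have hd0 : 0 < d (f i) := lt_of_le_of_ne (KF.d_nonneg B (f i)) (Ne.symm hi)
      have hs : Real.sqrt (d (f i)) * Real.sqrt (d (f i)) = d (f i) :=
        Real.mul_self_sqrt hd0.le
      have hsne : Real.sqrt (d (f i)) ≠ 0 := by positivity
      rw [hcdef]
      field_simp
      simp [Real.sq_sqrt hd0.le]
    · simp [hij]
  have hglt : ∀ i : Fin (min (Fintype.card X) (Fintype.card Z)),
      ((Fin.castLE hrZ i : Fin (Fintype.card Z)) : ℕ) < min (Fintype.card X) (Fintype.card Z) :=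
    fun i => i.isLt
  set v : Fin (Fintype.card Z) → EuclideanSpace ℝ Z :=
    fun j => if h : (j : ℕ) < min (Fintype.card X) (Fintype.card Z) then u' ⟨j, h⟩ else 0
    with hvdef
  set s' : Set (Fin (Fintype.card Z)) :=
    {j | ∃ h : (j : ℕ) < min (Fintype.card X) (Fintype.card Z), d (f ⟨j, h⟩) ≠ 0} with hs'def
  have hveq : ∀ (i : Fin (min (Fintype.card X) (Fintype.card Z))), d (f i) ≠ 0 →
      (Fin.castLE hrZ i) ∈ s' ∧ v (Fin.castLE hrZ i) = u' i := by
    intro i hi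
    have hmk : (⟨((Fin.castLE hrZ i : Fin (Fintype.card Z)) : ℕ), hglt i⟩ :
        Fin (min (Fintype.card X) (Fintype.card Z))) = i := Fin.ext rfl
    refine ⟨⟨hglt i, by rw [hmk]; exact hi⟩, ?_⟩
    rw [hvdef]
    simp only [hglt i, dif_pos, hmk]
  have horth : Orthonormal ℝ (s'.restrict v) := by
    rw [orthonormal_iff_ite]
    rintro ⟨j1, h1, hd1⟩ ⟨j2, h2, hd2⟩
    have e1 : v j1 = u' ⟨j1, h1⟩ := by rw [hvdef]; simp only [h1, dif_pos]
    have e2 : v j2 = u' ⟨j2, h2⟩ := by rw [hvdef]; simp only [h2, dif_pos]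
    change inner ℝ (v j1) (v j2) = _
    rw [e1, e2, hu'_inner _ _ hd1 hd2]
    by_cases hj : j1 = j2
    · subst hj; simp
    · rw [if_neg (by simp [Fin.ext_iff]; exact fun h => hj (Fin.ext h)),
        if_neg (by intro h; exact hj (congrArg Subtype.val h))]
  have hcardeq : Module.finrank ℝ (EuclideanSpace ℝ Z) = Fintype.card (Fin (Fintype.card Z)) := by
    simp [finrank_euclideanSpace]
  obtain ⟨b, hb⟩ := horth.exists_orthonormalBasis_extension_of_card_eq hcardeq
  set U : Matrix Z (Fin (min (Fintype.card X) (Fintype.card Z))) ℝ :=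
    Matrix.of fun z i => (WithLp.equiv 2 (Z → ℝ)) (b (Fin.castLE hrZ i)) z with hUdef
  have hUU : Uᵀ * U = 1 := by
    ext i j
    rw [mul_apply]
    simp only [transpose_apply, hUdef, Matrix.of_apply]
    have hbo := b.orthonormal
    rw [orthonormal_iff_ite] at hbo
    have h := hbo (Fin.castLE hrZ i) (Fin.castLE hrZ j)
    have hip : (inner ℝ (b (Fin.castLE hrZ i)) (b (Fin.castLE hrZ j)) : ℝ)
        = ∑ z, (WithLp.equiv 2 (Z → ℝ)) (b (Fin.castLE hrZ i)) z *
            (WithLp.equiv 2 (Z → ℝ)) (b (Fin.castLE hrZ j)) z := by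
      simp [PiLp.inner_apply, RCLike.inner_apply, mul_comm]
    rw [hip] at h
    rw [h]
    simp [Matrix.one_apply, (Fin.castLE_injective hrZ).eq_iff]
  refine ⟨U, V, hUU, hVV, ?_⟩
  -- trace computation
  have htr : (Uᵀ * B * V).trace = ∑ i, Real.sqrt (d (f i)) := by
    rw [Matrix.mul_assoc, ← hWdef, Matrix.trace]
    apply Finset.sum_congr rfl
    intro i _
    show (Uᵀ * W) i i = _
    rw [mul_apply]
    simp only [transpose_apply]
    by_cases hi : d (f i) = 0
    · have hz := hWzero i hi
      simp [hUdef, hz, hi]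
    · obtain ⟨hmem, hveq'⟩ := hveq i hi
      have hcol : ∀ z, U z i = c i * W z i := by
        intro z
        have hbu : b (Fin.castLE hrZ i) = u' i := (hb _ hmem).trans hveq'
        rw [hUdef]
        simp only [Matrix.of_apply, hbu, hu'def]
        simp [PiLp.smul_apply]
      have hd0 : 0 < d (f i) := lt_of_le_of_ne (KF.d_nonneg B (f i)) (Ne.symm hi)
      have hs : Real.sqrt (d (f i)) * Real.sqrt (d (f i)) = d (f i) :=
        Real.mul_self_sqrt hd0.le
      have hsne : Real.sqrt (d (f i)) ≠ 0 := by positivity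
      calc ∑ z, U z i * W z i = c i * ∑ z, W z i * W z i := by
            rw [Finset.mul_sum]
            exact Finset.sum_congr rfl fun z _ => by rw [hcol z]; ring
      _ = c i * d (f i) := by rw [hWdiagd i i, if_pos rfl]
      _ = Real.sqrt (d (f i)) := by
            rw [hcdef]
            field_simp
            rw [Real.sq_sqrt hd0.le]
  have hsum : ∑ i, Real.sqrt (d (f i)) = ∑ x, Real.sqrt (d x) := by
    have step1 : ∑ i, Real.sqrt (d (f i)) = ∑ x ∈ T, Real.sqrt (d x) := by
      rw [← Finset.sum_coe_sort T (fun x => Real.sqrt (d x))]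
      exact Fintype.sum_equiv e.symm _ _ (fun i => rfl)
    rw [step1]
    apply Finset.sum_subset hTuniv
    intro x _ hx
    have hdx : d x = 0 := by
      by_contra hne
      exact hx (hsT (Finset.mem_filter.mpr ⟨Finset.mem_univ x, hne⟩))
    rw [hdx, Real.sqrt_zero]
  rw [htr, hsum, KF.trace_sqrt]


lemma KF.dmerge {α n : Type*} [Fintype α] [DecidableEq α] (a b : α → ℝ) (M : Matrix α n ℝ) :
    Matrix.diagonal a * (Matrix.diagonal b * M) = Matrix.diagonal (fun x => a x * b x) * M := by
  rw [← Matrix.mul_assoc, diagonal_mul_diagonal]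

lemma KF.done {α n : Type*} [Fintype α] [DecidableEq α] (a : α → ℝ) (h : ∀ x, a x = 1)
    (M : Matrix α n ℝ) : Matrix.diagonal a * M = M := by
  ext i j
  simp [Matrix.mul_apply, Matrix.diagonal_apply, h, ite_mul, zero_mul]

theorem KF.main {Z X : Type*} [Fintype Z] [Fintype X]
    [Nonempty Z] [Nonempty X] [DecidableEq Z] [DecidableEq X]
    (P : Matrix Z X ℝ)
    (hP_nonneg : ∀ z x, 0 ≤ P z x) (hP_sum : ∑ z, ∑ x, P z x = 1)
    (PZ : Z → ℝ) (hPZ : ∀ z, PZ z = ∑ x, P z x) (hPZ_pos : ∀ z, 0 < PZ z)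
    (PX : X → ℝ) (hPX : ∀ x, PX x = ∑ z, P z x) (hPX_pos : ∀ x, 0 < PX x)
    (B : Matrix Z X ℝ) (hB : B = Matrix.diagonal (fun a => (Real.sqrt (PZ a))⁻¹) * P *
      Matrix.diagonal (fun b => (Real.sqrt (PX b))⁻¹)) :
    IsGreatest
      {t : ℝ | ∃ (F : Matrix Z (Fin (min (Fintype.card X) (Fintype.card Z))) ℝ)
          (G : Matrix X (Fin (min (Fintype.card X) (Fintype.card Z))) ℝ),
          Fᵀ * Matrix.diagonal PZ * F = 1 ∧ Gᵀ * Matrix.diagonal PX * G = 1 ∧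
            t = (Fᵀ * P * G).trace}
      (((Matrix.posSemidef_conjTranspose_mul_self B).1.eigenvectorUnitary : Matrix X X ℝ) *
        Matrix.diagonal ((RCLike.ofReal : ℝ → ℝ) ∘ Real.sqrt ∘ (Matrix.posSemidef_conjTranspose_mul_self B).1.eigenvalues) *
        (star ((Matrix.posSemidef_conjTranspose_mul_self B).1.eigenvectorUnitary : Matrix X X ℝ))).trace := by
  have hsZ : ∀ z, Real.sqrt (PZ z) ≠ 0 := fun z => ne_of_gt (Real.sqrt_pos.mpr (hPZ_pos z))
  have hsX : ∀ x, Real.sqrt (PX x) ≠ 0 := fun x => ne_of_gt (Real.sqrt_pos.mpr (hPX_pos x))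
  have hsqZ : ∀ z, Real.sqrt (PZ z) * Real.sqrt (PZ z) = PZ z :=
    fun z => Real.mul_self_sqrt (hPZ_pos z).le
  have hsqX : ∀ x, Real.sqrt (PX x) * Real.sqrt (PX x) = PX x :=
    fun x => Real.mul_self_sqrt (hPX_pos x).le
  constructor
  · -- membership
    obtain ⟨U, V, hUU, hVV, htr⟩ := KF.mem B
    refine ⟨Matrix.diagonal (fun z => (Real.sqrt (PZ z))⁻¹) * U,
        Matrix.diagonal (fun x => (Real.sqrt (PX x))⁻¹) * V, ?_, ?_, ?_⟩
    · simp only [transpose_mul, diagonal_transpose, Matrix.mul_assoc]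
      rw [KF.dmerge, KF.dmerge, KF.done _ (fun z => by
        field_simp [hsZ z]; rw [Real.sq_sqrt (hPZ_pos z).le]) U]
      exact hUU
    · simp only [transpose_mul, diagonal_transpose, Matrix.mul_assoc]
      rw [KF.dmerge, KF.dmerge, KF.done _ (fun x => by
        field_simp [hsX x]; rw [Real.sq_sqrt (hPX_pos x).le]) V]
      exact hVV
    · rw [← htr]
      congr 1
      rw [hB]
      simp only [transpose_mul, diagonal_transpose, Matrix.mul_assoc]
  · -- upper bound
    rintro t ⟨F, G, hF, hG, rfl⟩
    have key : Fᵀ * P * G =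
        (Matrix.diagonal (fun z => Real.sqrt (PZ z)) * F)ᵀ * B *
          (Matrix.diagonal (fun x => Real.sqrt (PX x)) * G) := by
      rw [hB]
      simp only [transpose_mul, diagonal_transpose, Matrix.mul_assoc]
      rw [KF.dmerge (fun z => Real.sqrt (PZ z)) (fun z => (Real.sqrt (PZ z))⁻¹),
        KF.done _ (fun z => mul_inv_cancel₀ (hsZ z)),
        KF.dmerge (fun x => (Real.sqrt (PX x))⁻¹) (fun x => Real.sqrt (PX x)),
        KF.done _ (fun x => inv_mul_cancel₀ (hsX x))]
    rw [key]
    apply KF.upper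
    · simp only [transpose_mul, diagonal_transpose, Matrix.mul_assoc]
      rw [KF.dmerge]
      have : (fun z => Real.sqrt (PZ z) * Real.sqrt (PZ z)) = PZ := funext hsqZ
      rw [this, ← Matrix.mul_assoc]
      exact hF
    · simp only [transpose_mul, diagonal_transpose, Matrix.mul_assoc]
      rw [KF.dmerge]
      have : (fun x => Real.sqrt (PX x) * Real.sqrt (PX x)) = PX := funext hsqX
      rw [this, ← Matrix.mul_assoc]
      exact hG

/-- **Ky Fan's extremum principle for the DTM.** The nuclear norm of the DTM `B` of a
joint pmf `P_{Z,X}` with strictly positive marginals is the maximum of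
`tr(Fᵀ P_{Z,X} G)` over `F, G` with `Fᵀ [P_Z] F = I_r` and `Gᵀ [P_X] G = I_r`,
where `r = min(|X|, |Z|)`. -/
theorem ky_fan_nuclear_norm_DTM {Z X : Type*} [Fintype Z] [Fintype X]
    [Nonempty Z] [Nonempty X] [DecidableEq Z] [DecidableEq X]
    (P : Matrix Z X ℝ)
    (hP_nonneg : ∀ z x, 0 ≤ P z x) (hP_sum : ∑ z, ∑ x, P z x = 1)
    (PZ : Z → ℝ) (hPZ : ∀ z, PZ z = ∑ x, P z x) (hPZ_pos : ∀ z, 0 < PZ z)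
    (PX : X → ℝ) (hPX : ∀ x, PX x = ∑ z, P z x) (hPX_pos : ∀ x, 0 < PX x)
    (B : Matrix Z X ℝ) (hB : B = DTM P PZ PX) :
    IsGreatest
      {t : ℝ | ∃ (F : Matrix Z (Fin (min (Fintype.card X) (Fintype.card Z))) ℝ)
          (G : Matrix X (Fin (min (Fintype.card X) (Fintype.card Z))) ℝ),
          Fᵀ * Matrix.diagonal PZ * F = 1 ∧ Gᵀ * Matrix.diagonal PX * G = 1 ∧
            t = (Fᵀ * P * G).trace}
      (((Matrix.posSemidef_conjTranspose_mul_self B).1.eigenvectorUnitary : Matrix X X ℝ) *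
        Matrix.diagonal ((RCLike.ofReal : ℝ → ℝ) ∘ Real.sqrt ∘ (Matrix.posSemidef_conjTranspose_mul_self B).1.eigenvalues) *
        (star ((Matrix.posSemidef_conjTranspose_mul_self B).1.eigenvectorUnitary : Matrix X X ℝ))).trace :=
  KF.main P hP_nonneg hP_sum PZ hPZ hPZ_pos PX hPX hPX_pos B hB
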